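/- Let γ ∈ [0,1) and let f be regularly varying at infinity with index -γ, non-increasing, with values in (0,1], and define φ(t) = ∏_{s=1}^{t-1} (1 + 1/s - f(s+1)/(2s)) and F^{-1} as the generalized inverse of the partial-sum function F of f. Then there is a constant C > 0, uniform in i, such that φ(F^{-1}(i)/2) / φ(F^{-1}(i)) ≥ C for all i ≥ 1. -/

import Mathlib

theorem stmt_10 (γ : ℝ) (hγ0 : 0 ≤ γ) (hγ1 : γ < 1) (f : ℝ → ℝ)
    (hpos : ∀ t : ℝ, 1 ≤ t → 0 < f t ∧ f t ≤ 1)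
    (hmono : ∀ x y : ℝ, 1 ≤ x → x ≤ y → f y ≤ f x)
    (hlim : Filter.Tendsto f Filter.atTop (nhds 0))
    (hrv : ∀ a : ℝ, 0 < a →
      Filter.Tendsto (fun t : ℝ => f (a * t) / f t) Filter.atTop
        (nhds (a ^ (-γ))))
    (φ : ℕ → ℝ)
    (hφ : ∀ t, φ t = ∏ s ∈ Finset.Icc 1 (t - 1),
      (1 + 1 / (s : ℝ) - f ((s : ℝ) + 1) / (2 * s)))
    (F Finv : ℝ → ℝ)
    (hF : ∀ r, F r = ∑ s ∈ Finset.Icc 1 ⌊r⌋₊, f s)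
    (hFinv : ∀ r, Finv r = sInf {s : ℝ | r ≤ F s}) :
    ∃ C : ℝ, 0 < C ∧ ∀ i : ℕ, 1 ≤ i →
      C ≤ φ ⌊Finv i / 2⌋₊ / φ ⌊Finv i⌋₊ := by
  set c : ℕ → ℝ := fun s => 1 + 1 / (s : ℝ) - f ((s : ℝ) + 1) / (2 * s) with hc
  -- basic facts about factors
  have hcpos : ∀ s : ℕ, 1 ≤ s → 1 < c s := by
    intro s hs
    have hs1 : (1 : ℝ) ≤ (s : ℝ) := by exact_mod_cast hs
    have hs0 : (0 : ℝ) < (s : ℝ) := by linarith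
    have hfle : f ((s : ℝ) + 1) ≤ 1 := (hpos _ (by linarith)).2
    have : f ((s : ℝ) + 1) / (2 * s) ≤ 1 / (2 * s) := by
      apply div_le_div_of_nonneg_right hfle (by linarith) |>.trans_eq rfl
    have h2 : 1 / (2 * (s : ℝ)) < 1 / (s : ℝ) := by
      rw [div_lt_div_iff₀ (by linarith) hs0]; nlinarith
    simp only [hc]
    nlinarith [this]
  have hcle : ∀ s : ℕ, 1 ≤ s → c s ≤ ((s : ℝ) + 1) / s := by
    intro s hs
    have hs1 : (1 : ℝ) ≤ (s : ℝ) := by exact_mod_cast hs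
    have hs0 : (0 : ℝ) < (s : ℝ) := by linarith
    have hfpos : 0 < f ((s : ℝ) + 1) := (hpos _ (by linarith)).1
    have hdiv : 0 < f ((s : ℝ) + 1) / (2 * s) := div_pos hfpos (by linarith)
    have : ((s : ℝ) + 1) / s = 1 + 1 / s := by field_simp
    simp only [hc]
    rw [this]; linarith
  have hφ1 : φ 1 = 1 := by rw [hφ]; simp
  have hφ0 : φ 0 = 1 := by rw [hφ]; simp
  have hstep : ∀ t : ℕ, 1 ≤ t → φ (t + 1) = φ t * c t := by
    intro t ht
    obtain ⟨b, rfl⟩ : ∃ b, t = b + 1 := ⟨t - 1, (Nat.succ_pred_eq_of_pos ht).symm⟩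
    rw [hφ, hφ]
    simp only [Nat.add_sub_cancel]
    rw [Finset.prod_Icc_succ_top (by omega : 1 ≤ b + 1)]
  have hφpos : ∀ t : ℕ, 0 < φ t := by
    intro t
    induction t with
    | zero => rw [hφ0]; norm_num
    | succ n ih =>
        rcases Nat.eq_zero_or_pos n with rfl | hn
        · rw [hφ1]; norm_num
        · rw [hstep n hn]
          exact mul_pos ih (lt_trans one_pos (hcpos n hn))
  have hkey : ∀ m n : ℕ, 1 ≤ m → m ≤ n → (m : ℝ) * φ n ≤ (n : ℝ) * φ m := by
    intro m n hm hmn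
    induction n, hmn using Nat.le_induction with
    | base => exact le_rfl
    | succ n hn ih =>
        have hn1 : 1 ≤ n := le_trans hm hn
        have hn0 : (0 : ℝ) < (n : ℝ) := by exact_mod_cast hn1
        rw [hstep n hn1]
        have hcub : c n ≤ ((n : ℝ) + 1) / n := hcle n hn1
        have h1 : (m : ℝ) * (φ n * c n) ≤ (m : ℝ) * φ n * (((n : ℝ) + 1) / n) := by
          rw [mul_assoc]
          apply mul_le_mul_of_nonneg_left _ (by positivity)
          exact mul_le_mul_of_nonneg_left hcub (hφpos n).le
        have h2 : (m : ℝ) * φ n * (((n : ℝ) + 1) / n) ≤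
            (n : ℝ) * φ m * (((n : ℝ) + 1) / n) := by
          apply mul_le_mul_of_nonneg_right ih (by positivity)
        have h3 : (n : ℝ) * φ m * (((n : ℝ) + 1) / n) = ((n : ℝ) + 1) * φ m := by
          field_simp
        push_cast
        exact h1.trans (h2.trans_eq h3)
  refine ⟨1 / 3, by norm_num, fun i hi => ?_⟩
  set x := Finv i with hx
  set m := ⌊x / 2⌋₊ with hm
  set n := ⌊x⌋₊ with hn
  rcases Nat.eq_zero_or_pos m with hm0 | hm1
  · -- m = 0, then n ≤ 1 so both φ values are 1
    have hn1 : n ≤ 1 := by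
      by_contra h
      push_neg at h
      have h2 : 2 ≤ n := h
      have hx2 : (2 : ℝ) ≤ x := by
        have hx0 : (0 : ℝ) ≤ x := by
          by_contra hneg
          push_neg at hneg
          have : n = 0 := Nat.floor_of_nonpos hneg.le
          omega
        have : (n : ℝ) ≤ x := Nat.floor_le hx0
        calc (2 : ℝ) ≤ (n : ℝ) := by exact_mod_cast h2
          _ ≤ x := this
      have : 1 ≤ m := by
        rw [hm]
        exact Nat.le_floor (by linarith)
      omega
    interval_cases n <;> rw [hm0] <;> simp [hφ0, hφ1] <;> norm_num
  · -- m ≥ 1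
    have hx0 : (0 : ℝ) ≤ x := by
      by_contra hneg
      push_neg at hneg
      have : m = 0 := Nat.floor_of_nonpos (by linarith)
      omega
    have hmn : m ≤ n := by
      apply Nat.floor_le_floor
      linarith
    have hn2m : n ≤ 2 * m + 1 := by
      have hxlt : x / 2 < (m : ℝ) + 1 := Nat.lt_floor_add_one _
      have hnx : (n : ℝ) ≤ x := Nat.floor_le hx0
      have hlt : (n : ℝ) < 2 * (m : ℝ) + 2 := by linarith
      have : n < 2 * m + 2 := by exact_mod_cast hlt
      omega
    have hkey' := hkey m n hm1 hmn
    have hφn : 0 < φ n := hφpos n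
    have hφm : 0 < φ m := hφpos m
    have hn0 : (0 : ℝ) < (n : ℝ) := by
      have : 1 ≤ n := le_trans hm1 hmn
      exact_mod_cast this
    have hratio : (m : ℝ) / (n : ℝ) ≤ φ m / φ n := by
      rw [div_le_div_iff₀ hn0 hφn]
      linarith [hkey']
    have hmn3 : (1 : ℝ) / 3 ≤ (m : ℝ) / n := by
      rw [div_le_div_iff₀ (by norm_num) hn0]
      have h1 : (n : ℝ) ≤ 2 * (m : ℝ) + 1 := by exact_mod_cast hn2m
      have hm1' : (1 : ℝ) ≤ (m : ℝ) := by exact_mod_cast hm1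
      linarith
    linarith
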